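/- Suppose each of m agents holds n i.i.d. scores, all scores being i.i.d. Bernoulli(p) for some p ∈ [0,1], and the test score S is an independent Bernoulli(p). For any ℓ ∈ {1,…,n}, the prediction set based on the average of the agents' ℓ-th order statistics, Ĉ^Avg(x) := {y : s(x,y) ≤ (1/m)Σ_{j=1}^m S_(ℓ:n),j}, has marginal coverage P(S ≤ (1/m)Σ_j S_(ℓ:n),j) = (1−p) + p·F_{U_((n−ℓ+1):n)}(p)^m, where F_{U_((n−ℓ+1):n)} is the cdf of the Beta(n−ℓ+1, ℓ) distribution. -/

import Mathlib

open MeasureTheory ProbabilityTheory Set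

/-- The `r`-th smallest value (order statistic, 1-indexed, ties with multiplicity)
of a finite real vector. -/
noncomputable def orderStat {N : ℕ} (S : Fin N → ℝ) (r : ℕ) : ℝ :=
  ((Multiset.ofList (List.ofFn S)).sort (· ≤ ·)).getD (r - 1) 0

/-- Product of `N` i.i.d. uniform distributions on `[0,1]`. -/
noncomputable def unifPi (N : ℕ) : Measure (Fin N → ℝ) :=
  Measure.pi fun _ => volume.restrict (Icc (0:ℝ) 1)

/-- The Beta(r, N-r+1) distribution: the law of the `r`-th order statistic of
`N` i.i.d. uniform random variables on `[0,1]`. -/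
noncomputable def betaOS (N r : ℕ) : Measure ℝ :=
  Measure.map (fun u => orderStat u r) (unifPi N)

/-- The cdf of the Beta(r, N-r+1) distribution (cdf of `U_(r:N)`). -/
noncomputable def betaCDF (N r : ℕ) (t : ℝ) : ℝ := (betaOS N r (Iic t)).toReal

/-- Generalized inverse (quantile function) of a cdf. -/
noncomputable def genInv (F : ℝ → ℝ) (p : ℝ) : ℝ := sInf {x | p ≤ F x}

/-- Quantile function of the Beta(r, N-r+1) distribution. -/
noncomputable def betaQuantile (N r : ℕ) (p : ℝ) : ℝ := genInv (betaCDF N r) p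

/-- Quantile-of-quantiles: the `k`-th smallest of the `m` within-group `ℓ`-th
order statistics of an `n × m` array. -/
noncomputable def qqStat {n m : ℕ} (ℓ k : ℕ) (Z : Fin n → Fin m → ℝ) : ℝ :=
  orderStat (fun j => orderStat (fun i => Z i j) ℓ) k

/-- Product of `n × m` i.i.d. uniform distributions on `[0,1]`. -/
noncomputable def unifPi2 (n m : ℕ) : Measure (Fin n → Fin m → ℝ) :=
  Measure.pi fun _ => Measure.pi fun _ => volume.restrict (Icc (0:ℝ) 1)

/-- The law of `U_(ℓ:n, k:m)`, the `k`-th order statistic of the `m` within-group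
`ℓ`-th order statistics of an `n × m` array of i.i.d. uniform variables
(equivalently, of `m` i.i.d. Beta(ℓ, n-ℓ+1) variables). -/
noncomputable def betaBetaOS (n m ℓ k : ℕ) : Measure ℝ :=
  Measure.map (qqStat ℓ k) (unifPi2 n m)

/-- The auxiliary function `g(t) = sup_{δ ∈ (0, min{t,1-t})} (t-δ)/√(log(1/δ))`. -/
noncomputable def gFun (t : ℝ) : ℝ :=
  sSup ((fun δ => (t - δ) / Real.sqrt (Real.log (1/δ))) '' Ioo 0 (min t (1 - t)))

/-- The cdf of the Poisson-Binomial distribution with parameter vector `u`,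
evaluated at the integer `r`. -/
noncomputable def pbCDF {m : ℕ} (u : Fin m → ℝ) (r : ℕ) : ℝ :=
  ∑ A ∈ Finset.univ.powerset.filter (fun A : Finset (Fin m) => A.card ≤ r),
    (∏ j ∈ A, u j) * ∏ j ∈ Aᶜ, (1 - u j)

lemma card_filter_eq_countP {n : ℕ} (v : Fin n → ℝ) (P : ℝ → Prop) [DecidablePred P] :
    (Finset.univ.filter (fun i => P (v i))).card
      = (List.ofFn v).countP (fun x => decide (P x)) := by
  rw [List.ofFn_eq_map, List.countP_map]
  rw [Finset.card_def, Finset.filter_val, Fin.univ_def]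
  simp only [Multiset.filter_coe, Multiset.coe_card]
  rw [List.countP_eq_length_filter]
  rfl

lemma sorted_getElem_le {l : List ℝ} (h : l.Pairwise (· ≤ ·)) {i j : ℕ}
    (hj : j < l.length) (hij : i ≤ j) : l[i]'(lt_of_le_of_lt hij hj) ≤ l[j] := by
  have := h.rel_get_of_le (a := ⟨i, lt_of_le_of_lt hij hj⟩) (b := ⟨j, hj⟩) (by simpa using hij)
  simpa using this

lemma orderStat_le_iff {n : ℕ} (v : Fin n → ℝ) {r : ℕ} (hr1 : 1 ≤ r) (hrn : r ≤ n) (t : ℝ) :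
    orderStat v r ≤ t ↔ r ≤ (Finset.univ.filter (fun i => v i ≤ t)).card := by
  classical
  set L := ((Multiset.ofList (List.ofFn v)).sort (· ≤ ·)) with hL
  have hlen : L.length = n := by rw [hL, Multiset.length_sort]; simp
  have hsort : L.Pairwise (· ≤ ·) := Multiset.pairwise_sort _ _
  have hperm : L.Perm (List.ofFn v) := by
    rw [← Multiset.coe_eq_coe, Multiset.sort_eq]
  have hcount : (Finset.univ.filter (fun i => v i ≤ t)).card
      = L.countP (fun x => decide (x ≤ t)) := by
    rw [card_filter_eq_countP v (fun x => x ≤ t)]; exact (hperm.countP_eq _).symm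
  have hidx : r - 1 < L.length := by omega
  have hget : orderStat v r = L[r-1] := by
    rw [orderStat, ← hL, List.getD_eq_getElem _ _ hidx]
  rw [hget, hcount]
  constructor
  · intro h
    have htake : (L.take r).countP (fun x => decide (x ≤ t)) = (L.take r).length := by
      rw [List.countP_eq_length]
      intro a ha
      rw [List.mem_take_iff_getElem] at ha
      obtain ⟨i, hm, rfl⟩ := ha
      simp only [decide_eq_true_eq]
      exact le_trans (sorted_getElem_le hsort hidx (by omega)) h
    have hlt : (L.take r).length = r := by simp [hlen]; omega
    calc r = (L.take r).countP (fun x => decide (x ≤ t)) := by rw [htake, hlt]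
    _ ≤ L.countP (fun x => decide (x ≤ t)) := by
        conv_rhs => rw [← List.take_append_drop r L]
        rw [List.countP_append]; omega
  · intro h
    by_contra hc
    push_neg at hc
    have hdrop : (L.drop (r-1)).countP (fun x => decide (x ≤ t)) = 0 := by
      rw [List.countP_eq_zero]
      intro a ha
      rw [List.mem_iff_getElem] at ha
      obtain ⟨i, hm, rfl⟩ := ha
      rw [List.getElem_drop]
      simp only [decide_eq_true_eq, not_le]
      exact lt_of_lt_of_le hc (sorted_getElem_le hsort (by simp at hm ⊢; omega) (by omega))
    have : L.countP (fun x => decide (x ≤ t)) ≤ r - 1 := by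
      conv_lhs => rw [← List.take_append_drop (r-1) L]
      rw [List.countP_append, hdrop]
      have := List.countP_le_length (p := fun x => decide (x ≤ t)) (l := L.take (r-1))
      simp [hlen] at this ⊢
      omega
    omega

lemma orderStat_mem {n : ℕ} (v : Fin n → ℝ) {r : ℕ} (hr1 : 1 ≤ r) (hrn : r ≤ n) :
    ∃ i, orderStat v r = v i := by
  classical
  set L := ((Multiset.ofList (List.ofFn v)).sort (· ≤ ·)) with hL
  have hlen : L.length = n := by rw [hL, Multiset.length_sort]; simp
  have hperm : L.Perm (List.ofFn v) := by
    rw [← Multiset.coe_eq_coe, Multiset.sort_eq]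
  have hidx : r - 1 < L.length := by omega
  have hget : orderStat v r = L[r-1] := by
    rw [orderStat, ← hL, List.getD_eq_getElem _ _ hidx]
  have : L[r-1] ∈ List.ofFn v := hperm.mem_iff.mp (List.getElem_mem hidx)
  rw [List.mem_ofFn] at this
  obtain ⟨i, hi⟩ := this
  exact ⟨i, by rw [hget, hi]⟩




def goodSet (n r : ℕ) : Finset (Fin n → Bool) :=
  Finset.univ.filter (fun u => r ≤ (Finset.univ.filter (fun i => u i = true)).card)

open Classical in
lemma count_eq_biUnion {Ω : Type*} {n : ℕ} (r : ℕ) (P : Fin n → Ω → Prop) :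
    {ω | r ≤ (Finset.univ.filter (fun i => P i ω)).card}
      = ⋃ u ∈ goodSet n r, {ω | ∀ i, (P i ω ↔ u i = true)} := by
  ext ω
  simp only [Set.mem_setOf_eq, Set.mem_iUnion, goodSet, Finset.mem_filter, Finset.mem_univ,
    true_and]
  constructor
  · intro h
    refine ⟨fun i => decide (P i ω), ?_, fun i => by simp⟩
    have : (Finset.univ.filter (fun i => decide (P i ω) = true))
        = (Finset.univ.filter (fun i => P i ω)) := by
      apply Finset.filter_congr; intro i _; simp
    rw [this]; exact h
  · rintro ⟨u, hu, hω⟩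
    have : (Finset.univ.filter (fun i => P i ω))
        = (Finset.univ.filter (fun i => u i = true)) := by
      apply Finset.filter_congr; intro i _; simp [hω i]
    rw [this]; exact hu

lemma atom_disjoint {Ω : Type*} {n : ℕ} (P : Fin n → Ω → Prop) {u u' : Fin n → Bool}
    (h : u ≠ u') :
    Disjoint {ω | ∀ i, (P i ω ↔ u i = true)} {ω | ∀ i, (P i ω ↔ u' i = true)} := by
  rw [Set.disjoint_left]
  intro ω h1 h2
  apply h
  funext i
  have := ((h1 i).symm.trans (h2 i))
  cases hu : u i <;> cases hu' : u' i <;> simp_all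

lemma atom_eq_pi {n : ℕ} {α : Type*} (A : Set α) (u : Fin n → Bool) :
    {f : Fin n → α | ∀ i, (f i ∈ A ↔ u i = true)}
      = Set.pi Set.univ (fun i => if u i then A else Aᶜ) := by
  ext f
  simp only [Set.mem_setOf_eq, Set.mem_pi, Set.mem_univ, forall_true_left, true_implies]
  refine forall_congr' fun i => ?_
  cases hu : u i <;> simp

lemma atom_measurable {n : ℕ} {α : Type*} [MeasurableSpace α] {A : Set α}
    (hA : MeasurableSet A) (u : Fin n → Bool) :
    MeasurableSet {f : Fin n → α | ∀ i, (f i ∈ A ↔ u i = true)} := by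
  rw [atom_eq_pi]
  exact MeasurableSet.univ_pi (fun i => by cases u i <;> simp [hA, hA.compl])

open Classical in
lemma pi_count_apply {α : Type*} [MeasurableSpace α] (κ : Measure α) [IsProbabilityMeasure κ]
    {n : ℕ} (r : ℕ) (A : Set α) (hA : MeasurableSet A) :
    Measure.pi (fun _ : Fin n => κ) {f | r ≤ (Finset.univ.filter (fun i => f i ∈ A)).card}
      = ∑ u ∈ goodSet n r, ∏ i, (if u i then κ A else κ Aᶜ) := by
  have hset := count_eq_biUnion r (fun i (f : Fin n → α) => f i ∈ A)
  rw [hset, measure_biUnion_finset ?_ (fun u _ => atom_measurable hA u)]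
  · refine Finset.sum_congr rfl fun u _ => ?_
    rw [atom_eq_pi, Measure.pi_pi]
    exact Finset.prod_congr rfl fun i _ => by cases u i <;> simp
  · intro u _ u' _ huu'
    exact atom_disjoint (fun i (f : Fin n → α) => f i ∈ A) huu'

noncomputable def Qe (n r : ℕ) (p : ℝ) : ENNReal :=
  ∑ u ∈ goodSet n r, ∏ i, (if u i then ENNReal.ofReal p else ENNReal.ofReal (1-p))

open Classical in
lemma measurable_orderStat {n r : ℕ} (hr1 : 1 ≤ r) (hrn : r ≤ n) :
    Measurable (fun u : Fin n → ℝ => orderStat u r) := by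
  apply measurable_of_Iic
  intro t
  have hset : (fun u : Fin n → ℝ => orderStat u r) ⁻¹' Iic t
      = {f : Fin n → ℝ | r ≤ (Finset.univ.filter (fun i => f i ≤ t)).card} := by
    ext f; exact orderStat_le_iff f hr1 hrn t
  rw [hset, count_eq_biUnion r (fun i (f : Fin n → ℝ) => f i ≤ t)]
  exact MeasurableSet.biUnion (Finset.countable_toSet _)
    (fun u _ => atom_measurable measurableSet_Iic u)

instance unifProb : IsProbabilityMeasure (volume.restrict (Icc (0:ℝ) 1)) :=
  ⟨by simp [Real.volume_Icc]⟩

lemma restrict_Iic_apply {p : ℝ} (hp0 : 0 ≤ p) (hp1 : p ≤ 1) :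
    (volume.restrict (Icc (0:ℝ) 1)) (Iic p) = ENNReal.ofReal p := by
  rw [Measure.restrict_apply measurableSet_Iic]
  have : Iic p ∩ Icc (0:ℝ) 1 = Icc 0 p := by
    ext x
    simp only [Set.mem_inter_iff, Set.mem_Iic, Set.mem_Icc]
    constructor
    · rintro ⟨h1, h2, h3⟩; exact ⟨h2, h1⟩
    · rintro ⟨h1, h2⟩; exact ⟨h2, h1, le_trans h2 hp1⟩
  rw [this, Real.volume_Icc]; norm_num

lemma restrict_Iic_compl_apply {p : ℝ} (hp0 : 0 ≤ p) (hp1 : p ≤ 1) :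
    (volume.restrict (Icc (0:ℝ) 1)) (Iic p)ᶜ = ENNReal.ofReal (1 - p) := by
  rw [measure_compl measurableSet_Iic (measure_ne_top _ _), restrict_Iic_apply hp0 hp1]
  rw [measure_univ, ENNReal.ofReal_sub 1 hp0, ENNReal.ofReal_one]

open Classical in
lemma betaCDF_eq {n r : ℕ} (hr1 : 1 ≤ r) (hrn : r ≤ n) {p : ℝ} (hp0 : 0 ≤ p) (hp1 : p ≤ 1) :
    betaOS n r (Iic p) = Qe n r p := by
  rw [betaOS, Measure.map_apply (measurable_orderStat hr1 hrn) measurableSet_Iic]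
  have hset : (fun u : Fin n → ℝ => orderStat u r) ⁻¹' Iic p
      = {f : Fin n → ℝ | r ≤ (Finset.univ.filter (fun i => f i ≤ p)).card} := by
    ext f; exact orderStat_le_iff f hr1 hrn p
  rw [hset]
  have := pi_count_apply (volume.restrict (Icc (0:ℝ) 1)) r (Iic p) measurableSet_Iic (n := n)
  simp only [Set.mem_Iic] at this
  rw [unifPi, this, Qe]
  refine Finset.sum_congr rfl fun u _ => Finset.prod_congr rfl fun i _ => ?_
  rw [restrict_Iic_apply hp0 hp1, restrict_Iic_compl_apply hp0 hp1]

open Classical in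
lemma orderStat_indicator {n ℓ : ℕ} (h1 : 1 ≤ ℓ) (h2 : ℓ ≤ n) (v : Fin n → ℝ)
    (hv : ∀ i, v i = 0 ∨ v i = 1) :
    orderStat v ℓ
      = if (n - ℓ + 1) ≤ (Finset.univ.filter (fun i => v i = 1)).card then 1 else 0 := by
  obtain ⟨i0, hi0⟩ := orderStat_mem v h1 h2
  have h01 : orderStat v ℓ = 0 ∨ orderStat v ℓ = 1 := by rw [hi0]; exact hv i0
  have hle := orderStat_le_iff v h1 h2 0
  have hcount : (Finset.univ.filter (fun i => v i ≤ 0)).card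
      = n - (Finset.univ.filter (fun i => v i = 1)).card := by
    have heq : (Finset.univ.filter (fun i => v i ≤ 0))
        = (Finset.univ.filter (fun i => ¬ (v i = 1))) := by
      apply Finset.filter_congr; intro i _
      rcases hv i with h | h <;> simp [h]
    rw [heq, Finset.filter_not, Finset.card_sdiff_of_subset (Finset.filter_subset _ _)]
    simp
  set c := (Finset.univ.filter (fun i => v i = 1)).card with hc
  have hcn : c ≤ n := by
    calc c ≤ Finset.univ.card := Finset.card_filter_le _ _
    _ = n := by simp
  by_cases hcase : n - ℓ + 1 ≤ c
  · rw [if_pos hcase]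
    rcases h01 with h0 | h1' 
    · exfalso
      have : ℓ ≤ n - c := by rw [← hcount]; exact hle.mp (by rw [h0])
      omega
    · exact h1'
  · rw [if_neg hcase]
    rcases h01 with h0 | h1'
    · exact h0
    · exfalso
      have hle0 : orderStat v ℓ ≤ 0 := hle.mpr (by rw [hcount]; omega)
      rw [h1'] at hle0; linarith

open Classical in
lemma Qe_pow (n m r : ℕ) (p : ℝ) :
    (Qe n r p) ^ m
      = ∑ t ∈ Finset.univ.filter
          (fun t : Fin n × Fin m → Bool =>
            ∀ j, r ≤ (Finset.univ.filter (fun i => t (i,j) = true)).card),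
          ∏ x : Fin n × Fin m,
            (if t x then ENNReal.ofReal p else ENNReal.ofReal (1-p)) := by
  have h1 : (Qe n r p)^m = ∏ _j : Fin m, Qe n r p := by rw [Finset.prod_const]; simp
  rw [h1]
  simp only [Qe]
  rw [Finset.prod_univ_sum]
  refine Finset.sum_nbij' (i := fun g (x : Fin n × Fin m) => g x.2 x.1)
    (j := fun t j i => t (i, j)) ?_ ?_ ?_ ?_ ?_
  · intro g hg
    simp only [Fintype.mem_piFinset, goodSet, Finset.mem_filter, Finset.mem_univ, true_and] at hg ⊢
    exact fun j => hg j
  · intro t ht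
    simp only [Fintype.mem_piFinset, goodSet, Finset.mem_filter, Finset.mem_univ, true_and] at ht ⊢
    exact fun j => ht j
  · intro g _; rfl
  · intro t _; rfl
  · intro g _
    rw [Fintype.prod_prod_type]
    exact Finset.prod_comm

lemma atomOmega_eq {Ω : Type*} {n : ℕ} (Y : Fin n → Ω → ℝ) (u : Fin n → Bool) :
    {ω | ∀ i, (Y i ω = 1 ↔ u i = true)}
      = ⋂ i, Y i ⁻¹' (if u i then {(1:ℝ)} else {(1:ℝ)}ᶜ) := by
  ext ω
  simp only [Set.mem_setOf_eq, Set.mem_iInter, Set.mem_preimage]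
  refine forall_congr' fun i => ?_
  cases u i <;> simp


/-- With `m` agents each holding `n` i.i.d. Bernoulli(p) scores and an
independent Bernoulli(p) test score `S`, the averaged-quantile prediction set has
marginal coverage
`P(S ≤ (1/m)Σ_j S_(ℓ:n),j) = (1-p) + p·F_{U_((n-ℓ+1):n)}(p)^m`,
where `F_{U_((n-ℓ+1):n)}` is the Beta(n-ℓ+1, ℓ) cdf. -/
theorem avg_quantile_bernoulli {Ω : Type*} [MeasurableSpace Ω]
    (μ : Measure Ω) [IsProbabilityMeasure μ]
    {n m : ℕ} (hn : 1 ≤ n) (hm : 1 ≤ m)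
    (ℓ : ℕ) (hℓ1 : 1 ≤ ℓ) (hℓn : ℓ ≤ n)
    (p : ℝ) (hp : p ∈ Icc (0:ℝ) 1)
    (W : Option (Fin n × Fin m) → Ω → ℝ) (ν : Measure ℝ)
    (hν : ν = ENNReal.ofReal p • Measure.dirac (1 : ℝ)
        + ENNReal.ofReal (1 - p) • Measure.dirac (0 : ℝ))
    (hmeas : ∀ a, Measurable (W a))
    (hindep : iIndepFun W μ)
    (hlaw : ∀ a, Measure.map (W a) μ = ν) :
    (μ {ω | W none ω
        ≤ (1 / (m : ℝ)) * ∑ j : Fin m, orderStat (fun i => W (some (i, j)) ω) ℓ}).toReal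
      = (1 - p) + p * (betaCDF n (n - ℓ + 1) p) ^ m := by
  classical
  obtain ⟨hp0, hp1⟩ := hp
  set r := n - ℓ + 1 with hrdef
  have hr1 : 1 ≤ r := by omega
  have hrn : r ≤ n := by omega
  -- ν values
  have hν1 : ν {(1:ℝ)} = ENNReal.ofReal p := by
    rw [hν]; simp [Measure.dirac_apply' _ (measurableSet_singleton _)]
  have hν0 : ν {(0:ℝ)} = ENNReal.ofReal (1-p) := by
    rw [hν]; simp [Measure.dirac_apply' _ (measurableSet_singleton _)]
  have hν1c : ν ({(1:ℝ)}ᶜ) = ENNReal.ofReal (1-p) := by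
    rw [hν]; simp [Measure.dirac_apply' _ (measurableSet_singleton _).compl]
  have h01m : MeasurableSet ({0,1} : Set ℝ) := by measurability
  have hν01 : ν ({0,1}ᶜ : Set ℝ) = 0 := by
    rw [hν]; simp [Measure.dirac_apply' _ h01m.compl]
  have hpre : ∀ (a : Option (Fin n × Fin m)) {s : Set ℝ}, MeasurableSet s
      → μ (W a ⁻¹' s) = ν s := by
    intro a s hs; rw [← hlaw a, Measure.map_apply (hmeas a) hs]
  -- the good set G
  have hGc : μ ({ω | ∀ a, W a ω = 0 ∨ W a ω = 1}ᶜ) = 0 := by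
    have hsub : {ω | ∀ a, W a ω = 0 ∨ W a ω = 1}ᶜ
        ⊆ ⋃ a, W a ⁻¹' ({0,1}ᶜ : Set ℝ) := by
      intro ω hω
      simp only [Set.mem_compl_iff, Set.mem_setOf_eq, not_forall] at hω
      obtain ⟨a, ha⟩ := hω
      refine Set.mem_iUnion.mpr ⟨a, ?_⟩
      simp only [Set.mem_preimage, Set.mem_compl_iff, Set.mem_insert_iff,
        Set.mem_singleton_iff]
      tauto
    refine measure_mono_null hsub (measure_iUnion_null fun a => ?_)
    rw [hpre a h01m.compl, hν01]
  -- sets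
  have hmpos : (0:ℝ) < m := by exact_mod_cast hm
  -- E vs D pointwise on G
  have hEDG : ∀ ω, (∀ a, W a ω = 0 ∨ W a ω = 1) →
      (ω ∈ {ω | W none ω
        ≤ (1 / (m : ℝ)) * ∑ j : Fin m, orderStat (fun i => W (some (i, j)) ω) ℓ}
      ↔ ω ∈ (W none ⁻¹' {0}) ∪ ((W none ⁻¹' {1})
          ∩ ⋂ j : Fin m, {ω | r ≤ (Finset.univ.filter
              (fun i => W (some (i,j)) ω = 1)).card})) := by
    intro ω hωG
    have hOS : ∀ j : Fin m, orderStat (fun i => W (some (i,j)) ω) ℓ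
        = if r ≤ (Finset.univ.filter (fun i => W (some (i,j)) ω = 1)).card
          then 1 else 0 :=
      fun j => orderStat_indicator hℓ1 hℓn _ (fun i => hωG (some (i,j)))
    have hsum : ∑ j : Fin m, orderStat (fun i => W (some (i,j)) ω) ℓ
        = ((Finset.univ.filter (fun j : Fin m => r ≤ (Finset.univ.filter
            (fun i => W (some (i,j)) ω = 1)).card)).card : ℝ) := by
      rw [Finset.sum_congr rfl (fun j _ => hOS j), Finset.sum_boole]
    set k := (Finset.univ.filter (fun j : Fin m => r ≤ (Finset.univ.filter
            (fun i => W (some (i,j)) ω = 1)).card)).card with hk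
    rcases hωG none with h0 | h1
    · refine iff_of_true ?_ (Or.inl (by simpa using h0))
      show W none ω ≤ _
      rw [h0, hsum]
      positivity
    · have hkm : k ≤ m := by
        calc k ≤ Finset.univ.card := Finset.card_filter_le _ _
        _ = m := by simp
      have hiff : W none ω ≤ (1 / (m : ℝ)) * ∑ j : Fin m,
            orderStat (fun i => W (some (i,j)) ω) ℓ ↔ m ≤ k := by
        rw [h1, hsum, one_div, inv_mul_eq_div, le_div_iff₀ hmpos, one_mul, Nat.cast_le]
      have hiff2 : m ≤ k ↔ ∀ j : Fin m, r ≤ (Finset.univ.filter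
            (fun i => W (some (i,j)) ω = 1)).card := by
        constructor
        · intro hmk
          have hcard : (Finset.univ.filter (fun j : Fin m => r ≤ (Finset.univ.filter
              (fun i => W (some (i,j)) ω = 1)).card)).card = Fintype.card (Fin m) := by
            simp only [Fintype.card_fin]; omega
          have := Finset.card_eq_iff_eq_univ _ |>.mp hcard
          intro j
          have hj : j ∈ Finset.univ.filter (fun j : Fin m => r ≤ (Finset.univ.filter
              (fun i => W (some (i,j)) ω = 1)).card) := by
            rw [this]; exact Finset.mem_univ j
          exact (Finset.mem_filter.mp hj).2
        · intro hall
          have : Finset.univ.filter (fun j : Fin m => r ≤ (Finset.univ.filter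
              (fun i => W (some (i,j)) ω = 1)).card) = Finset.univ := by
            apply Finset.filter_true_of_mem; intro j _; exact hall j
          rw [hk, this]; simp
      constructor
      · intro hE
        refine Or.inr ⟨by simpa using h1, ?_⟩
        rw [Set.mem_iInter]
        intro j
        exact (hiff2.mp (hiff.mp hE)) j
      · rintro (h0' | ⟨-, hB⟩)
        · exfalso
          simp only [Set.mem_preimage, Set.mem_singleton_iff] at h0'
          rw [h0'] at h1; norm_num at h1
        · refine hiff.mpr (hiff2.mpr fun j => ?_)
          rw [Set.mem_iInter] at hB
          exact hB j
  -- μ E = μ D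
  have hED : μ {ω | W none ω
        ≤ (1 / (m : ℝ)) * ∑ j : Fin m, orderStat (fun i => W (some (i, j)) ω) ℓ}
      = μ ((W none ⁻¹' {0}) ∪ ((W none ⁻¹' {1})
          ∩ ⋂ j : Fin m, {ω | r ≤ (Finset.univ.filter
              (fun i => W (some (i,j)) ω = 1)).card})) := by
    apply measure_congr
    rw [Filter.eventuallyEq_set]
    have hGae : ∀ᵐ ω ∂μ, ∀ a, W a ω = 0 ∨ W a ω = 1 := by
      rw [ae_iff]
      simpa [Set.compl_setOf] using hGc
    filter_upwards [hGae] with ω hω using hEDG ω hω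
  -- measurability of cylinder pieces
  have hCm : ∀ (t : Fin n × Fin m → Bool) (a : Option (Fin n × Fin m)),
      MeasurableSet (Option.elim a {(1:ℝ)} (fun x => if t x then {(1:ℝ)} else {(1:ℝ)}ᶜ)) := by
    intro t a
    cases a with
    | none => exact measurableSet_singleton _
    | some x =>
      by_cases hx : t x <;>
        simp [hx, measurableSet_singleton, (measurableSet_singleton (1:ℝ)).compl]
  -- decomposition into atoms
  have hdecomp : (W none ⁻¹' {1}) ∩ (⋂ j : Fin m, {ω | r ≤ (Finset.univ.filter
          (fun i => W (some (i,j)) ω = 1)).card})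
      = ⋃ t ∈ Finset.univ.filter (fun t : Fin n × Fin m → Bool =>
            ∀ j, r ≤ (Finset.univ.filter (fun i => t (i,j) = true)).card),
          ⋂ a : Option (Fin n × Fin m), W a ⁻¹'
            (Option.elim a {(1:ℝ)} (fun x => if t x then {(1:ℝ)} else {(1:ℝ)}ᶜ)) := by
    ext ω
    simp only [Set.mem_inter_iff, Set.mem_preimage, Set.mem_singleton_iff, Set.mem_iInter,
      Set.mem_iUnion, Finset.mem_filter, Finset.mem_univ, true_and, Set.mem_setOf_eq]
    constructor
    · rintro ⟨h1, hBj⟩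
      refine ⟨fun x => decide (W (some x) ω = 1), fun j => ?_, fun a => ?_⟩
      · have heq : Finset.univ.filter (fun i : Fin n => decide (W (some (i,j)) ω = 1) = true)
            = Finset.univ.filter (fun i : Fin n => W (some (i,j)) ω = 1) := by
          apply Finset.filter_congr; intro i _; simp
        rw [heq]; exact hBj j
      · cases a with
        | none => simpa using h1
        | some x =>
          by_cases hx : W (some x) ω = 1 <;> simp [hx, Option.elim]
    · rintro ⟨t, ht, hatom⟩
      have hnone := hatom none
      simp only [Option.elim] at hnone
      refine ⟨hnone, fun j => ?_⟩
      have heq : Finset.univ.filter (fun i : Fin n => W (some (i,j)) ω = 1)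
          = Finset.univ.filter (fun i : Fin n => t (i,j) = true) := by
        apply Finset.filter_congr; intro i _
        have hsx := hatom (some (i,j))
        simp only [Option.elim] at hsx
        cases hti : t (i,j) <;> rw [hti] at hsx <;> simp at hsx <;> simp [hsx]
      rw [heq]; exact ht j
  -- atom measure value
  have hAtomVal : ∀ t : Fin n × Fin m → Bool,
      μ (⋂ a : Option (Fin n × Fin m), W a ⁻¹'
          (Option.elim a {(1:ℝ)} (fun x => if t x then {(1:ℝ)} else {(1:ℝ)}ᶜ)))
      = ENNReal.ofReal p * ∏ x : Fin n × Fin m,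
          (if t x then ENNReal.ofReal p else ENNReal.ofReal (1-p)) := by
    intro t
    have hbig : (⋂ a : Option (Fin n × Fin m), W a ⁻¹'
          (Option.elim a {(1:ℝ)} (fun x => if t x then {(1:ℝ)} else {(1:ℝ)}ᶜ)))
        = ⋂ a ∈ (Finset.univ : Finset (Option (Fin n × Fin m))), W a ⁻¹'
          (Option.elim a {(1:ℝ)} (fun x => if t x then {(1:ℝ)} else {(1:ℝ)}ᶜ)) := by
      simp
    rw [hbig, hindep.measure_inter_preimage_eq_mul Finset.univ (fun a _ => hCm t a)]
    rw [Finset.prod_congr rfl (fun a _ => hpre a (hCm t a)), Fintype.prod_option]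
    simp only [Option.elim]
    rw [hν1]
    congr 1
    refine Finset.prod_congr rfl fun x _ => ?_
    by_cases hx : t x <;> simp [hx, hν1, hν1c]
  have hAtomMeas : ∀ t : Fin n × Fin m → Bool, MeasurableSet
      (⋂ a : Option (Fin n × Fin m), W a ⁻¹'
          (Option.elim a {(1:ℝ)} (fun x => if t x then {(1:ℝ)} else {(1:ℝ)}ᶜ))) :=
    fun t => MeasurableSet.iInter fun a => (hmeas a) (hCm t a)
  have hAtomDisj : ∀ t t' : Fin n × Fin m → Bool, t ≠ t' →
      Disjoint (⋂ a : Option (Fin n × Fin m), W a ⁻¹'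
          (Option.elim a {(1:ℝ)} (fun x => if t x then {(1:ℝ)} else {(1:ℝ)}ᶜ)))
        (⋂ a : Option (Fin n × Fin m), W a ⁻¹'
          (Option.elim a {(1:ℝ)} (fun x => if t' x then {(1:ℝ)} else {(1:ℝ)}ᶜ))) := by
    intro t t' htt'
    rw [Set.disjoint_left]
    intro ω hω hω'
    apply htt'
    funext x
    have h1 := Set.mem_iInter.mp hω (some x)
    have h2 := Set.mem_iInter.mp hω' (some x)
    simp only [Option.elim, Set.mem_preimage] at h1 h2
    have h1' : W (some x) ω ∈ (if t x then ({(1:ℝ)} : Set ℝ) else {(1:ℝ)}ᶜ) := h1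
    have h2' : W (some x) ω ∈ (if t' x then ({(1:ℝ)} : Set ℝ) else {(1:ℝ)}ᶜ) := h2
    clear h1 h2
    cases hx : t x <;> cases hx' : t' x <;> rw [hx] at h1' <;> rw [hx'] at h2' <;>
      simp at h1' h2'
    · exact absurd h2' h1'
    · exact absurd h1' h2'
  -- measure of second piece
  have hμ1B : μ ((W none ⁻¹' {1}) ∩ (⋂ j : Fin m, {ω | r ≤ (Finset.univ.filter
          (fun i => W (some (i,j)) ω = 1)).card}))
      = ENNReal.ofReal p * (Qe n r p)^m := by
    rw [hdecomp, measure_biUnion_finset (fun t _ t' _ htt' => hAtomDisj t t' htt')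
      (fun t _ => hAtomMeas t)]
    rw [Finset.sum_congr rfl (fun t _ => hAtomVal t), ← Finset.mul_sum, ← Qe_pow]
  have hRight : MeasurableSet ((W none ⁻¹' {1}) ∩ (⋂ j : Fin m, {ω | r ≤ (Finset.univ.filter
          (fun i => W (some (i,j)) ω = 1)).card})) := by
    rw [hdecomp]
    exact MeasurableSet.biUnion (Finset.countable_toSet _) (fun t _ => hAtomMeas t)
  have hDisjD : Disjoint (W none ⁻¹' {0}) ((W none ⁻¹' {1}) ∩ (⋂ j : Fin m,
      {ω | r ≤ (Finset.univ.filter (fun i => W (some (i,j)) ω = 1)).card})) := by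
    rw [Set.disjoint_left]
    rintro ω h0 ⟨h1, -⟩
    simp only [Set.mem_preimage, Set.mem_singleton_iff] at h0 h1
    rw [h0] at h1; norm_num at h1
  rw [hED, measure_union hDisjD hRight, hpre none (measurableSet_singleton _), hν0, hμ1B]
  have hQtop : Qe n r p ≠ ⊤ := by
    rw [Qe]
    refine (ENNReal.sum_lt_top.mpr fun u _ => ?_).ne
    refine ENNReal.prod_lt_top fun i _ => ?_
    by_cases hu : u i <;> simp [hu, ENNReal.ofReal_lt_top]
  have hQbeta : betaCDF n r p = (Qe n r p).toReal := by
    rw [betaCDF, betaCDF_eq hr1 hrn hp0 hp1]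
  rw [ENNReal.toReal_add ENNReal.ofReal_ne_top
    (ENNReal.mul_ne_top ENNReal.ofReal_ne_top (ENNReal.pow_ne_top hQtop))]
  rw [ENNReal.toReal_mul, ENNReal.toReal_pow]
  rw [ENNReal.toReal_ofReal (by linarith), ENNReal.toReal_ofReal hp0, hQbeta]
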